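/- Let (A_1, …, A_N) be a Clifford system on ℝ^m with N ≥ 1, P_i(x) = ⟨x, A_i x⟩, and let e(x) := Σ_{i=1}^N ‖∇P_i(x)‖² (the squared Hilbert–Schmidt norm of the differential of P = (P_1,…,P_N)). Then e(x) = 4N‖x‖² and, for every i ∈ {1,…,N} and every x ∈ ℝ^m, ⟨∇P_i(x), ∇e(x)⟩ = 16N·P_i(x). In particular, the map P is umbillic: dP(∇‖dP‖²(x)) = 16N·P(x) for all x. -/

import Mathlib

open RealInnerProductSpace

/-- The quadratic form `P(x) = ⟨x, A x⟩` associated to an `m × m` real matrix `A`. -/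
noncomputable def quadForm {m : ℕ} (A : Matrix (Fin m) (Fin m) ℝ)
    (x : EuclideanSpace ℝ (Fin m)) : ℝ :=
  ⟪x, Matrix.toEuclideanLin A x⟫

/-- A Clifford system on `ℝ^m`. -/
def IsCliffordSystem {m N : ℕ} (A : Fin N → Matrix (Fin m) (Fin m) ℝ) : Prop :=
  (∀ i, (A i).IsSymm) ∧
    ∀ i j, A i * A j + A j * A i
      = (if i = j then (2 : ℝ) else 0) • (1 : Matrix (Fin m) (Fin m) ℝ)

lemma toEuclideanLin_symm {m : ℕ} {A : Matrix (Fin m) (Fin m) ℝ} (hA : A.IsSymm)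
    (x y : EuclideanSpace ℝ (Fin m)) :
    ⟪Matrix.toEuclideanLin A x, y⟫ = ⟪x, Matrix.toEuclideanLin A y⟫ := by
  have : A.IsHermitian := hA
  exact (Matrix.isHermitian_iff_isSymmetric.mp this) x y

lemma hasGradientAt_quadForm {m : ℕ} {A : Matrix (Fin m) (Fin m) ℝ} (hA : A.IsSymm)
    (x : EuclideanSpace ℝ (Fin m)) :
    HasGradientAt (quadForm A) ((2:ℝ) • Matrix.toEuclideanLin A x) x := by
  set T : EuclideanSpace ℝ (Fin m) →L[ℝ] EuclideanSpace ℝ (Fin m) :=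
    LinearMap.toContinuousLinearMap (Matrix.toEuclideanLin A)
  have hT : HasFDerivAt (fun t => T t) (T : _ →L[ℝ] _) x := T.hasFDerivAt
  have h := (hasFDerivAt_id x).inner ℝ hT
  rw [hasGradientAt_iff_hasFDerivAt]
  refine h.congr_fderiv ?_
  ext h'
  simp only [ContinuousLinearMap.comp_apply, ContinuousLinearMap.prod_apply,
    fderivInnerCLM_apply, ContinuousLinearMap.coe_id', id_eq,
    InnerProductSpace.toDual_apply_apply]
  have : T h' = Matrix.toEuclideanLin A h' := rfl
  have hx : T x = Matrix.toEuclideanLin A x := rfl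
  rw [this, hx, inner_smul_left, toEuclideanLin_symm hA x h',
    ← toEuclideanLin_symm hA h' x]
  simp [two_mul, mul_comm]
  exact real_inner_comm _ _

lemma toEuclideanLin_comp {m : ℕ} (A B : Matrix (Fin m) (Fin m) ℝ)
    (x : EuclideanSpace ℝ (Fin m)) :
    Matrix.toEuclideanLin A (Matrix.toEuclideanLin B x) = Matrix.toEuclideanLin (A * B) x := by
  simp [Matrix.toEuclideanLin_apply, Matrix.mulVec_mulVec]

lemma toEuclideanLin_one {m : ℕ} (x : EuclideanSpace ℝ (Fin m)) :
    Matrix.toEuclideanLin (1 : Matrix (Fin m) (Fin m) ℝ) x = x := by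
  simp [Matrix.toEuclideanLin_apply, Matrix.one_mulVec]

/-- For a Clifford system `(A_1, …, A_N)` on `ℝ^m` (`N ≥ 1`) with
quadratic forms `P_i(x) = ⟨x, A_i x⟩` and energy density
`e(x) = Σ_i ‖∇P_i(x)‖² = ‖dP‖²(x)`, one has `e(x) = 4N‖x‖²` and
`⟨∇P_i(x), ∇e(x)⟩ = 16N·P_i(x)` for all `i` and `x`; i.e. the map `P` is umbillic with
`dP(∇‖dP‖²(x)) = 16N·P(x)`. -/
theorem clifford_quadratic_map_umbillic {m N : ℕ} (hN : 1 ≤ N)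
    (A : Fin N → Matrix (Fin m) (Fin m) ℝ) (hA : IsCliffordSystem A)
    (e : EuclideanSpace ℝ (Fin m) → ℝ)
    (he : ∀ x, e x = ∑ i : Fin N, ‖gradient (quadForm (A i)) x‖ ^ 2) :
    ∀ x : EuclideanSpace ℝ (Fin m),
      e x = 4 * N * ‖x‖ ^ 2 ∧
      ∀ i : Fin N,
        ⟪gradient (quadForm (A i)) x, gradient e x⟫ = 16 * N * quadForm (A i) x := by
  have hsq : ∀ i, A i * A i = (1 : Matrix (Fin m) (Fin m) ℝ) := by
    intro i
    have h := hA.2 i i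
    simp only [if_pos rfl] at h
    have h2 : (2:ℝ) • (A i * A i) = (2:ℝ) • (1 : Matrix (Fin m) (Fin m) ℝ) := by
      rw [two_smul]; exact h
    exact smul_right_injective _ (two_ne_zero) h2
  have hgrad : ∀ i x, gradient (quadForm (A i)) x = (2:ℝ) • Matrix.toEuclideanLin (A i) x :=
    fun i x => (hasGradientAt_quadForm (hA.1 i) x).gradient
  have hnorm : ∀ i (x : EuclideanSpace ℝ (Fin m)),
      ‖gradient (quadForm (A i)) x‖ ^ 2 = 4 * ‖x‖ ^ 2 := by
    intro i x
    rw [hgrad, norm_smul]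
    have : ‖Matrix.toEuclideanLin (A i) x‖ ^ 2 = ‖x‖ ^ 2 := by
      rw [← real_inner_self_eq_norm_sq, ← real_inner_self_eq_norm_sq,
        toEuclideanLin_symm (hA.1 i), toEuclideanLin_comp, hsq, toEuclideanLin_one]
    rw [mul_pow, ← this]
    norm_num
  have hpart : ∀ x : EuclideanSpace ℝ (Fin m), e x = 4 * N * ‖x‖ ^ 2 := by
    intro x
    rw [he x]
    simp only [hnorm]
    rw [Finset.sum_const, Finset.card_univ, Fintype.card_fin, nsmul_eq_mul]
    ring
  intro x
  refine ⟨hpart x, fun i => ?_⟩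
  have hq1 : ∀ y : EuclideanSpace ℝ (Fin m), quadForm (1 : Matrix (Fin m) (Fin m) ℝ) y
      = ‖y‖ ^ 2 := by
    intro y
    rw [quadForm, toEuclideanLin_one, real_inner_self_eq_norm_sq]
  have hge : HasGradientAt e ((8 * N : ℝ) • x) x := by
    have h1 : HasGradientAt (quadForm (1 : Matrix (Fin m) (Fin m) ℝ)) ((2:ℝ) • x) x := by
      have := hasGradientAt_quadForm (Matrix.isSymm_one (α := ℝ) (n := Fin m)) x
      rwa [toEuclideanLin_one] at this
    have h2 : HasFDerivAt (fun y => (4 * N : ℝ) * quadForm (1 : Matrix (Fin m) (Fin m) ℝ) y)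
        ((4 * N : ℝ) • (InnerProductSpace.toDual ℝ _ ((2:ℝ) • x))) x :=
      (hasGradientAt_iff_hasFDerivAt.mp h1).const_mul _
    have heq : e = fun y => (4 * N : ℝ) * quadForm (1 : Matrix (Fin m) (Fin m) ℝ) y := by
      funext y; rw [hpart y, hq1 y]
    rw [hasGradientAt_iff_hasFDerivAt, heq]
    refine h2.congr_fderiv ?_
    rw [← map_smul, smul_smul]
    norm_num
    ring_nf
  rw [hge.gradient, hgrad]
  rw [inner_smul_left, inner_smul_right, quadForm, ← toEuclideanLin_symm (hA.1 i)]
  simp only [starRingEnd_apply, star_trivial]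
  push_cast
  ring
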